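/- (Alternating sign property.) Suppose f satisfies -1 ≤ f(x,y) ≤ 0 for all x, y ∈ X (non-negative pair potential). Then for all n ≥ 1, all k ≥ 0 and all (x_1,…,x_{n+k}) ∈ X^{n+k}, ψ_{n,n+k}(x_1,…,x_{n+k}) = (-1)^k |ψ_{n,n+k}(x_1,…,x_{n+k})|, i.e. (-1)^k ψ_{n,n+k}(x_1,…,x_{n+k}) ≥ 0. -/
import Mathlib


open scoped Classical

noncomputable section

/-- Weight of a graph `G` on `{0,…,m-1}` with respect to the Mayer function `f`
and the colouring `x`. -/
def graphWeight {X : Type} (f : X → X → ℝ) {m : ℕ} (G : SimpleGraph (Fin m))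
    (x : Fin m → X) : ℝ :=
  ∏ p ∈ Finset.univ.filter (fun p : Fin m × Fin m => p.1 < p.2 ∧ G.Adj p.1 p.2),
    f (x p.1) (x p.2)

/-- A graph on `Fin m` is root-connected with roots `{0,…,n-1}` if every non-root
vertex is adjacent to at least one root vertex. -/
def rootConnected (n : ℕ) {m : ℕ} (G : SimpleGraph (Fin m)) : Prop :=
  ∀ j : Fin m, n ≤ (j : ℕ) → ∃ i : Fin m, (i : ℕ) < n ∧ G.Adj i j

/-- `ψ_{n,n+k}`: sum of graph weights over all root-connected graphs. -/
def psi {X : Type} (f : X → X → ℝ) (n k : ℕ) (x : Fin (n + k) → X) : ℝ :=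
  ∑ G ∈ Finset.univ.filter (fun G : SimpleGraph (Fin (n + k)) => rootConnected n G),
    graphWeight f G x

namespace St11


variable {α ι : Type} [DecidableEq α] [DecidableEq ι]

lemma sum_powerset_prod (s : Finset α) (w : α → ℝ) :
    ∑ t ∈ s.powerset, ∏ p ∈ t, w p = ∏ p ∈ s, (1 + w p) := by
  have := Finset.prod_add w (fun _ => (1:ℝ)) s
  simp only [Finset.prod_const_one, mul_one] at this
  rw [← this]
  exact Finset.prod_congr rfl (fun i _ => by ring)

lemma sum_powerset_nonempty (B : Finset α) (w : α → ℝ) :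
    ∑ b ∈ B.powerset.filter (fun b => b.Nonempty), ∏ p ∈ b, w p
      = ∏ p ∈ B, (1 + w p) - 1 := by
  have hsplit := Finset.sum_filter_add_sum_filter_not B.powerset
    (fun b => b.Nonempty) (fun b => ∏ p ∈ b, w p)
  have h2 : B.powerset.filter (fun b => ¬ b.Nonempty) = {∅} := by
    ext t
    simp only [Finset.mem_filter, Finset.mem_powerset, Finset.not_nonempty_iff_eq_empty,
      Finset.mem_singleton, and_iff_right_iff_imp]
    rintro rfl; exact Finset.empty_subset B
  rw [h2] at hsplit
  simp only [Finset.sum_singleton, Finset.prod_empty] at hsplit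
  have := sum_powerset_prod B w
  linarith [hsplit, this]

lemma sum_split (A B : Finset α) (hd : Disjoint A B) (w : α → ℝ)
    (qa qb : Finset α → Prop) :
    ∑ s ∈ (A ∪ B).powerset.filter (fun s => qa (s ∩ A) ∧ qb (s ∩ B)), ∏ p ∈ s, w p
      = (∑ a ∈ A.powerset.filter qa, ∏ p ∈ a, w p) *
        (∑ b ∈ B.powerset.filter qb, ∏ p ∈ b, w p) := by
  rw [Finset.sum_mul_sum, ← Finset.sum_product']
  refine Finset.sum_nbij' (fun s => (s ∩ A, s ∩ B)) (fun pr => pr.1 ∪ pr.2) ?_ ?_ ?_ ?_ ?_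
  · intro s hs
    simp only [Finset.mem_filter, Finset.mem_powerset] at hs
    simp only [Finset.mem_product, Finset.mem_filter, Finset.mem_powerset]
    exact ⟨⟨Finset.inter_subset_right, hs.2.1⟩, ⟨Finset.inter_subset_right, hs.2.2⟩⟩
  · intro pr hpr
    simp only [Finset.mem_product, Finset.mem_filter, Finset.mem_powerset] at hpr
    obtain ⟨⟨ha, hqa⟩, hb, hqb⟩ := hpr
    have e1 : (pr.1 ∪ pr.2) ∩ A = pr.1 := by
      rw [Finset.union_inter_distrib_right, Finset.inter_eq_left.2 ha,
        Finset.disjoint_iff_inter_eq_empty.1 (hd.symm.mono_left hb), Finset.union_empty]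
    have e2 : (pr.1 ∪ pr.2) ∩ B = pr.2 := by
      rw [Finset.union_inter_distrib_right, Finset.inter_eq_left.2 hb,
        Finset.disjoint_iff_inter_eq_empty.1 (hd.mono_left ha), Finset.empty_union]
    simp only [Finset.mem_filter, Finset.mem_powerset, e1, e2]
    exact ⟨Finset.union_subset_union ha hb, hqa, hqb⟩
  · intro s hs
    simp only [Finset.mem_filter, Finset.mem_powerset] at hs
    show s ∩ A ∪ s ∩ B = s
    rw [← Finset.inter_union_distrib_left, Finset.inter_eq_left.2 hs.1]
  · intro pr hpr
    simp only [Finset.mem_product, Finset.mem_filter, Finset.mem_powerset] at hpr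
    obtain ⟨⟨ha, _⟩, hb, _⟩ := hpr
    have e1 : (pr.1 ∪ pr.2) ∩ A = pr.1 := by
      rw [Finset.union_inter_distrib_right, Finset.inter_eq_left.2 ha,
        Finset.disjoint_iff_inter_eq_empty.1 (hd.symm.mono_left hb), Finset.union_empty]
    have e2 : (pr.1 ∪ pr.2) ∩ B = pr.2 := by
      rw [Finset.union_inter_distrib_right, Finset.inter_eq_left.2 hb,
        Finset.disjoint_iff_inter_eq_empty.1 (hd.mono_left ha), Finset.empty_union]
    show ((pr.1 ∪ pr.2) ∩ A, (pr.1 ∪ pr.2) ∩ B) = pr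
    rw [e1, e2]
  · intro s hs
    simp only [Finset.mem_filter, Finset.mem_powerset] at hs
    have hdisj : Disjoint (s ∩ A) (s ∩ B) :=
      hd.mono Finset.inter_subset_right Finset.inter_subset_right
    have hun : s ∩ A ∪ s ∩ B = s := by
      rw [← Finset.inter_union_distrib_left, Finset.inter_eq_left.2 hs.1]
    rw [← Finset.prod_union hdisj, hun]


lemma prod_neg' (J : Finset ι) (d : ι → ℝ) :
    ∏ j ∈ J, (-(d j)) = (-1 : ℝ) ^ J.card * ∏ j ∈ J, d j := by
  have : ∀ j ∈ J, -(d j) = (-1) * d j := fun j _ => by ring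
  rw [Finset.prod_congr rfl this, Finset.prod_mul_distrib, Finset.prod_const]

lemma blocks (w : α → ℝ) (B : ι → Finset α) :
    ∀ (J : Finset ι) (A : Finset α),
      (∀ j ∈ J, Disjoint A (B j)) →
      (∀ j ∈ J, ∀ j' ∈ J, j ≠ j' → Disjoint (B j) (B j')) →
      ∑ s ∈ (A ∪ J.biUnion B).powerset.filter
          (fun s => ∀ j ∈ J, (s ∩ B j).Nonempty), ∏ p ∈ s, w p
        = (∏ p ∈ A, (1 + w p)) * ∏ j ∈ J, ((∏ p ∈ B j, (1 + w p)) - 1) := by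
  intro J
  induction J using Finset.induction_on with
  | empty =>
    intro A _ _
    simp only [Finset.notMem_empty, false_implies, implies_true, Finset.filter_true_of_mem,
      fun _ _ => trivial, Finset.biUnion_empty, Finset.union_empty, Finset.prod_empty, mul_one]
    exact sum_powerset_prod A w
  | @insert j J' hj ih =>
    intro A hA hBB
    have hAj : Disjoint A (B j) := hA j (Finset.mem_insert_self j J')
    have hrest : Disjoint (B j) (A ∪ J'.biUnion B) := by
      refine Finset.disjoint_union_right.2 ⟨hAj.symm, ?_⟩
      rw [Finset.disjoint_biUnion_right]
      intro j' hj'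
      exact hBB j (Finset.mem_insert_self j J') j' (Finset.mem_insert_of_mem hj')
        (fun h => hj (h ▸ hj'))
    have hun : A ∪ (insert j J').biUnion B = B j ∪ (A ∪ J'.biUnion B) := by
      rw [Finset.biUnion_insert]
      ext p; simp only [Finset.mem_union]; tauto
    -- rewrite the filter condition
    have hfilter : ((A ∪ (insert j J').biUnion B).powerset.filter
          (fun s => ∀ j'' ∈ insert j J', (s ∩ B j'').Nonempty))
        = ((B j ∪ (A ∪ J'.biUnion B)).powerset.filter
          (fun s => (s ∩ B j).Nonempty ∧
            (∀ j' ∈ J', ((s ∩ (A ∪ J'.biUnion B)) ∩ B j').Nonempty))) := by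
      rw [hun]
      refine Finset.filter_congr ?_
      intro s hs
      rw [Finset.mem_powerset] at hs
      have key : ∀ j' ∈ J', (s ∩ (A ∪ J'.biUnion B)) ∩ B j' = s ∩ B j' := by
        intro j' hj'
        ext p
        simp only [Finset.mem_inter, Finset.mem_union]
        constructor
        · tauto
        · rintro ⟨hps, hpB⟩
          have hdisj := hBB j (Finset.mem_insert_self j J') j' (Finset.mem_insert_of_mem hj')
            (fun he => hj (he ▸ hj'))
          rcases Finset.mem_union.1 (hs hps) with h | h
          · exact absurd hpB (Finset.disjoint_left.1 hdisj h)
          · exact ⟨⟨hps, Finset.mem_union.1 h⟩, hpB⟩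
      constructor
      · intro h
        refine ⟨h j (Finset.mem_insert_self j J'), fun j' hj' => ?_⟩
        rw [key j' hj']
        exact h j' (Finset.mem_insert_of_mem hj')
      · rintro ⟨h1, h2⟩ j'' hj''
        rcases Finset.mem_insert.1 hj'' with rfl | hmem
        · exact h1
        · have := h2 j'' hmem
          rwa [key j'' hmem] at this
    rw [hfilter]
    have hsplit : (∑ s ∈ (B j ∪ (A ∪ J'.biUnion B)).powerset.filter
          (fun s => (s ∩ B j).Nonempty ∧
            ∀ j' ∈ J', (s ∩ (A ∪ J'.biUnion B) ∩ B j').Nonempty), ∏ p ∈ s, w p)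
        = (∑ a ∈ (B j).powerset.filter (fun t => t.Nonempty), ∏ p ∈ a, w p) *
          (∑ b ∈ (A ∪ J'.biUnion B).powerset.filter
              (fun t => ∀ j' ∈ J', (t ∩ B j').Nonempty), ∏ p ∈ b, w p) :=
      by
        have h := sum_split (B j) (A ∪ J'.biUnion B) hrest w (fun t => t.Nonempty)
          (fun t => ∀ j' ∈ J', (t ∩ B j').Nonempty)
        convert h using 2 <;> congr!
    rw [hsplit, sum_powerset_nonempty,
      ih A (fun j' hj' => hA j' (Finset.mem_insert_of_mem hj'))
        (fun a ha b hb hne => hBB a (Finset.mem_insert_of_mem ha) b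
          (Finset.mem_insert_of_mem hb) hne),
      Finset.prod_insert hj]
    ring


lemma psi_eq {X : Type} (f : X → X → ℝ) (n k : ℕ) (x : Fin (n+k) → X) :
    psi f n k x
      = ∑ s ∈ ((Finset.univ.filter
            (fun p : Fin (n+k) × Fin (n+k) => p.1 < p.2)).powerset.filter
          (fun s => ∀ j : Fin (n+k), n ≤ (j:ℕ) →
            ∃ i : Fin (n+k), (i:ℕ) < n ∧ (i, j) ∈ s)),
        ∏ p ∈ s, f (x p.1) (x p.2) := by
  unfold psi graphWeight
  refine Finset.sum_nbij'
    (fun G => Finset.univ.filter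
      (fun p : Fin (n+k) × Fin (n+k) => p.1 < p.2 ∧ G.Adj p.1 p.2))
    (fun s => SimpleGraph.fromRel (fun a b => (a, b) ∈ s)) ?_ ?_ ?_ ?_ ?_
  · intro G hG
    simp only [Finset.mem_filter, Finset.mem_univ, true_and] at hG
    simp only [Finset.mem_filter, Finset.mem_powerset]
    constructor
    · intro p hp
      simp only [Finset.mem_filter, Finset.mem_univ, true_and] at hp ⊢
      exact hp.1
    · intro j hj
      obtain ⟨i, hi, hadj⟩ := hG j hj
      refine ⟨i, hi, ?_⟩
      simp only [Finset.mem_filter, Finset.mem_univ, true_and]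
      exact ⟨Fin.lt_def.2 (lt_of_lt_of_le hi hj), hadj⟩
  · intro s hs
    simp only [Finset.mem_filter, Finset.mem_powerset] at hs
    simp only [Finset.mem_filter, Finset.mem_univ, true_and]
    intro j hj
    obtain ⟨i, hi, hmem⟩ := hs.2 j hj
    refine ⟨i, hi, ?_⟩
    rw [SimpleGraph.fromRel_adj]
    refine ⟨?_, Or.inl hmem⟩
    intro he
    rw [he] at hi
    omega
  · intro G hG
    ext a b
    rw [SimpleGraph.fromRel_adj]
    simp only [Finset.mem_filter, Finset.mem_univ, true_and]
    constructor
    · rintro ⟨hne, (⟨_, h⟩ | ⟨_, h⟩)⟩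
      · exact h
      · exact h.symm
    · intro hadj
      refine ⟨G.ne_of_adj hadj, ?_⟩
      rcases lt_or_gt_of_ne (G.ne_of_adj hadj) with h | h
      · exact Or.inl ⟨h, hadj⟩
      · exact Or.inr ⟨h, hadj.symm⟩
  · intro s hs
    simp only [Finset.mem_filter, Finset.mem_powerset] at hs
    ext p
    simp only [Finset.mem_filter, Finset.mem_univ, true_and, SimpleGraph.fromRel_adj]
    constructor
    · rintro ⟨hlt, _, (h | h)⟩
      · exact h
      · have := hs.1 h
        simp only [Finset.mem_filter, Finset.mem_univ, true_and] at this
        exact absurd hlt (asymm this)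
    · intro hp
      have hlt := hs.1 hp
      simp only [Finset.mem_filter, Finset.mem_univ, true_and] at hlt
      exact ⟨hlt, ne_of_lt hlt, Or.inl hp⟩
  · intro G _
    rfl


end St11

open St11 in
/-- **Corollary 3.4 (alternating sign property).** For a non-negative pair potential
(`-1 ≤ f ≤ 0`), `ψ_{n,n+k} = (-1)^k |ψ_{n,n+k}|`. -/
theorem statement11 {X : Type} (f : X → X → ℝ) (hsym : ∀ a b, f a b = f b a)
    (hfge : ∀ a b, (-1 : ℝ) ≤ f a b) (hfle : ∀ a b, f a b ≤ 0)
    (n k : ℕ) (hn : 1 ≤ n) (x : Fin (n + k) → X) :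
    psi f n k x = (-1 : ℝ) ^ k * |psi f n k x| := by
  have hsign : 0 ≤ (-1 : ℝ) ^ k * psi f n k x := by
    rw [psi_eq]
    set w : Fin (n+k) × Fin (n+k) → ℝ := fun p => f (x p.1) (x p.2) with hw
    set P : Finset (Fin (n+k) × Fin (n+k)) :=
      Finset.univ.filter (fun p : Fin (n+k) × Fin (n+k) => p.1 < p.2) with hP
    set J : Finset (Fin (n+k)) :=
      Finset.univ.filter (fun j : Fin (n+k) => n ≤ (j:ℕ)) with hJ
    set Bl : Fin (n+k) → Finset (Fin (n+k) × Fin (n+k)) :=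
      fun j => Finset.univ.filter
        (fun p : Fin (n+k) × Fin (n+k) => (p.1:ℕ) < n ∧ p.2 = j) with hBl
    set A : Finset (Fin (n+k) × Fin (n+k)) := P \ J.biUnion Bl with hA
    have hBP : J.biUnion Bl ⊆ P := by
      intro p hp
      rw [Finset.mem_biUnion] at hp
      obtain ⟨j, hj, hpj⟩ := hp
      simp only [hJ, hBl, hP, Finset.mem_filter, Finset.mem_univ, true_and] at hj hpj ⊢
      rcases hpj with ⟨h1, h2⟩
      rw [Fin.lt_def, h2]
      omega
    have hunion : A ∪ J.biUnion Bl = P := Finset.sdiff_union_of_subset hBP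
    have hAd : ∀ j ∈ J, Disjoint A (Bl j) := by
      intro j hj
      exact Finset.sdiff_disjoint.mono_right (Finset.subset_biUnion_of_mem Bl hj)
    have hBB : ∀ j ∈ J, ∀ j' ∈ J, j ≠ j' → Disjoint (Bl j) (Bl j') := by
      intro j _ j' _ hne
      rw [Finset.disjoint_left]
      intro p hp hp'
      simp only [hBl, Finset.mem_filter, Finset.mem_univ, true_and] at hp hp'
      exact hne (hp.2 ▸ hp'.2)
    have hfilter : P.powerset.filter
          (fun s => ∀ j : Fin (n+k), n ≤ (j:ℕ) → ∃ i : Fin (n+k), (i:ℕ) < n ∧ (i, j) ∈ s)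
        = (A ∪ J.biUnion Bl).powerset.filter (fun s => ∀ j ∈ J, (s ∩ Bl j).Nonempty) := by
      rw [hunion]
      refine Finset.filter_congr ?_
      intro s _
      constructor
      · intro h j hj
        simp only [hJ, Finset.mem_filter, Finset.mem_univ, true_and] at hj
        obtain ⟨i, hi, hmem⟩ := h j hj
        refine ⟨(i, j), ?_⟩
        simp only [Finset.mem_inter, hBl, Finset.mem_filter, Finset.mem_univ, true_and]
        exact ⟨hmem, hi, trivial⟩
      · intro h j hj
        have hjJ : j ∈ J := by
          simp only [hJ, Finset.mem_filter, Finset.mem_univ, true_and]; exact hj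
        obtain ⟨p, hp⟩ := h j hjJ
        simp only [Finset.mem_inter, hBl, Finset.mem_filter, Finset.mem_univ, true_and] at hp
        obtain ⟨hps, hp1, hp2⟩ := hp
        exact ⟨p.1, hp1, by rw [← hp2]; exact hps⟩
    have hblocks := blocks w Bl J A hAd hBB
    have heq : ∑ s ∈ P.powerset.filter
          (fun s => ∀ j : Fin (n+k), n ≤ (j:ℕ) → ∃ i : Fin (n+k), (i:ℕ) < n ∧ (i, j) ∈ s),
          ∏ p ∈ s, w p
        = (∏ p ∈ A, (1 + w p)) * ∏ j ∈ J, ((∏ p ∈ Bl j, (1 + w p)) - 1) := by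
      rw [← hblocks]
      refine Finset.sum_congr ?_ (fun _ _ => rfl)
      rw [hfilter]
      congr!
    rw [heq]
    -- card of J
    have hcard : J.card = k := by
      have himg : J = Finset.image
          (fun i : Fin k => (⟨n + (i:ℕ), by omega⟩ : Fin (n+k))) Finset.univ := by
        ext j
        simp only [hJ, Finset.mem_filter, Finset.mem_univ, true_and, Finset.mem_image]
        constructor
        · intro hj
          exact ⟨⟨(j:ℕ) - n, by omega⟩, by ext; simp; omega⟩
        · rintro ⟨i, _, rfl⟩; simp
      rw [himg, Finset.card_image_of_injective _ ?_, Finset.card_univ, Fintype.card_fin]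
      intro a b hab
      have : n + (a:ℕ) = n + (b:ℕ) := congrArg Fin.val hab
      exact Fin.ext (by omega)
    -- signs
    have hw0 : ∀ p, 0 ≤ 1 + w p := fun p => by have := hfge (x p.1) (x p.2); simp [hw]; linarith
    have hw1 : ∀ p, 1 + w p ≤ 1 := fun p => by have := hfle (x p.1) (x p.2); simp [hw]; linarith
    have hprodA : 0 ≤ ∏ p ∈ A, (1 + w p) := Finset.prod_nonneg (fun p _ => hw0 p)
    have hd : ∀ j, 0 ≤ 1 - ∏ p ∈ Bl j, (1 + w p) := by
      intro j
      have := Finset.prod_le_one (fun p (_ : p ∈ Bl j) => hw0 p) (fun p _ => hw1 p)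
      linarith
    have hneg : ∏ j ∈ J, ((∏ p ∈ Bl j, (1 + w p)) - 1)
        = (-1 : ℝ) ^ J.card * ∏ j ∈ J, (1 - ∏ p ∈ Bl j, (1 + w p)) := by
      rw [← prod_neg']
      exact Finset.prod_congr rfl (fun j _ => by ring)
    rw [hcard] at hneg
    rw [hneg, show ∀ a b : ℝ, (-1:ℝ)^k * (a * ((-1:ℝ)^k * b))
        = ((-1:ℝ)^k * (-1:ℝ)^k) * (a * b) from fun a b => by ring, ← mul_pow]
    norm_num
    exact mul_nonneg hprodA (Finset.prod_nonneg (fun j _ => hd j))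
  have h1 : |psi f n k x| = (-1:ℝ)^k * psi f n k x := by
    rw [← abs_of_nonneg hsign, abs_mul, abs_pow, abs_neg, abs_one, one_pow, one_mul]
  rw [h1, ← mul_assoc, ← mul_pow]
  norm_num


end
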